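/- Monotonicity of polarization-disagreement in homogeneous stubbornness: Let L be a graph Laplacian and s ∈ R^n. Define PD(α) = s̄^T (I + α^{-1}L)^{-1}(I+L)(I + α^{-1}L)^{-1} s̄ and P(α) = s̄^T (I + α^{-1}L)^{-2} s̄ where s̄ = s - ((s^T 1)/n)·1. Then for any 0 < α ≤ β, PD(α) ≤ PD(β) and P(α) ≤ P(β). -/

import Mathlib

open Matrix

private theorem alg_id' {R : Type*} [Ring R] (A B C : R) [Invertible B] [Invertible C]
    (hAB : Commute A B) (hAC : Commute A C) (hBC : Commute B C) :
    ⅟B * A * ⅟B - ⅟C * A * ⅟C = (⅟B * ⅟C) * (A * (C*C - B*B)) * (⅟C * ⅟B) := by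
  have h1 : Commute A (⅟B) := hAB.invOf_right
  have h2 : Commute A (⅟C) := hAC.invOf_right
  have h4 : Commute B (⅟C) := hBC.invOf_right
  have h5 : Commute (⅟B) (⅟C) := h4.invOf_left
  have e1 : ⅟B * ⅟C * (A * (C * C)) * (⅟C * ⅟B) = ⅟B * A * ⅟B := by
    simp only [mul_assoc]
    rw [mul_invOf_cancel_left, ← mul_assoc (⅟C) A, ← h2.eq, mul_assoc,
      invOf_mul_cancel_left]
  have e2 : ⅟B * ⅟C * (A * (B * B)) * (⅟C * ⅟B) = ⅟C * A * ⅟C := by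
    rw [h5.eq]
    simp only [mul_assoc]
    rw [← mul_assoc B (⅟C), h4.eq, mul_assoc, mul_invOf_self, mul_one,
      ← mul_assoc A B, hAB.eq, mul_assoc, invOf_mul_cancel_left]
  rw [mul_sub A, mul_sub, sub_mul, e1, e2]

private theorem psd_smul' {n : ℕ} {L : Matrix (Fin n) (Fin n) ℝ} (hL : L.PosSemidef)
    {t : ℝ} (ht : 0 ≤ t) : (t • L).PosSemidef := by
  refine .of_dotProduct_mulVec_nonneg ?_ fun x => ?_
  · simpa [Matrix.IsHermitian, conjTranspose_smul] using congrArg (t • ·) hL.1.eq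
  · rw [smul_mulVec, dotProduct_smul, smul_eq_mul]
    exact mul_nonneg ht (hL.dotProduct_mulVec_nonneg x)

private theorem key' {n : ℕ} {L : Matrix (Fin n) (Fin n) ℝ} (hL : L.PosSemidef)
    (c a b : ℝ) (hc : 0 ≤ c) (hb : 0 < b) (hba : b ≤ a) (v : Fin n → ℝ) :
    v ⬝ᵥ (((1 + a • L)⁻¹ * (1 + c • L) * (1 + a • L)⁻¹) *ᵥ v)
      ≤ v ⬝ᵥ (((1 + b • L)⁻¹ * (1 + c • L) * (1 + b • L)⁻¹) *ᵥ v) := by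
  set A := 1 + c • L with hAdef
  set B := 1 + b • L with hBdef
  set C := 1 + a • L with hCdef
  have ha : (0:ℝ) < a := lt_of_lt_of_le hb hba
  have hB : B.PosDef := Matrix.PosDef.one.add_posSemidef (psd_smul' hL hb.le)
  have hC : C.PosDef := Matrix.PosDef.one.add_posSemidef (psd_smul' hL ha.le)
  letI : Invertible B := B.invertibleOfIsUnitDet ((Matrix.isUnit_iff_isUnit_det B).1 hB.isUnit)
  letI : Invertible C := C.invertibleOfIsUnitDet ((Matrix.isUnit_iff_isUnit_det C).1 hC.isUnit)
  have hcomm : ∀ s t : ℝ, Commute (1 + s • L) (1 + t • L) := by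
    intro s t
    show _ = _
    simp only [add_mul, mul_add, one_mul, mul_one, mul_smul_comm, smul_mul_assoc, smul_smul]
    module
  have hAB : Commute A B := hcomm c b
  have hAC : Commute A C := hcomm c a
  have hBC : Commute B C := hcomm b a
  -- expansion of the middle matrix
  have hL2 : (L * L).PosSemidef := by simpa [pow_two] using hL.pow 2
  have hL3 : (L * (L * L)).PosSemidef := by
    have := hL.pow 3
    rwa [pow_succ', pow_succ', pow_one] at this
  have hMid : A * (C * C - B * B) =
      (2*a - 2*b) • L + ((a*a - b*b) + c*(2*a - 2*b)) • (L * L)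
        + (c*(a*a - b*b)) • (L * (L * L)) := by
    rw [hAdef, hBdef, hCdef]
    simp only [mul_sub, sub_mul, mul_add, add_mul, one_mul, mul_one,
      mul_smul_comm, smul_mul_assoc, smul_smul]
    module
  have hab2 : b * b ≤ a * a := mul_self_le_mul_self hb.le hba
  have hMidPSD : (A * (C * C - B * B)).PosSemidef := by
    rw [hMid]
    refine Matrix.PosSemidef.add (Matrix.PosSemidef.add ?_ ?_) ?_
    · exact psd_smul' hL (by linarith)
    · exact psd_smul' hL2 (by nlinarith)
    · exact psd_smul' hL3 (by nlinarith)
  have hid := alg_id' A B C hAB hAC hBC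
  rw [Matrix.invOf_eq_nonsing_inv, Matrix.invOf_eq_nonsing_inv] at hid
  have hherm : (C⁻¹ * B⁻¹) = (B⁻¹ * C⁻¹)ᴴ := by
    rw [conjTranspose_mul, hB.isHermitian.inv.eq, hC.isHermitian.inv.eq]
  have hX : (B⁻¹ * A * B⁻¹ - C⁻¹ * A * C⁻¹).PosSemidef := by
    rw [hid, hherm]
    exact hMidPSD.mul_mul_conjTranspose_same (B⁻¹ * C⁻¹)
  have h0 := hX.dotProduct_mulVec_nonneg v
  rw [star_trivial, Matrix.sub_mulVec, dotProduct_sub, sub_nonneg] at h0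
  exact h0

theorem stmt6 {n : ℕ} (L : Matrix (Fin n) (Fin n) ℝ)
    (hL : L.PosSemidef) (hL1 : L *ᵥ 1 = 0)
    (s : Fin n → ℝ) (α β : ℝ) (hα : 0 < α) (hαβ : α ≤ β) :
    let sb := s - ((s ⬝ᵥ (1 : Fin n → ℝ)) / (n : ℝ)) • (1 : Fin n → ℝ)
    let PD : ℝ → ℝ := fun γ => sb ⬝ᵥ (((1 + γ⁻¹ • L)⁻¹ * (1 + L) * (1 + γ⁻¹ • L)⁻¹) *ᵥ sb)
    let P : ℝ → ℝ := fun γ => sb ⬝ᵥ (((1 + γ⁻¹ • L)⁻¹ * (1 + γ⁻¹ • L)⁻¹) *ᵥ sb)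
    PD α ≤ PD β ∧ P α ≤ P β := by
  intro sb PD P
  have hβ : 0 < β := lt_of_lt_of_le hα hαβ
  have hb : 0 < β⁻¹ := inv_pos.2 hβ
  have hba : β⁻¹ ≤ α⁻¹ := by
    rw [inv_le_inv₀ hβ hα]; exact hαβ
  constructor
  · have := key' hL 1 α⁻¹ β⁻¹ zero_le_one hb hba sb
    simpa [one_smul] using this
  · have := key' hL 0 α⁻¹ β⁻¹ le_rfl hb hba sb
    simpa [zero_smul, add_zero, mul_one] using this
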